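/- (Robbins–Siegmund Lemma) Let (Ω, F, P) be a probability space with a filtration (F_k), and let (v^k), (θ^k), (ε^k) and (δ^k) be sequences of nonnegative integrable random variables adapted to (F_k) such that, almost surely, ∑_{k=0}^∞ ε^k < ∞, ∑_{k=0}^∞ δ^k < ∞, and E[v^{k+1} | F_k] ≤ (1+δ^k) v^k + ε^k − θ^k for all k ∈ ℕ. Then, almost surely, ∑_{k=0}^∞ θ^k < ∞ and the sequence (v^k) converges to a nonnegative random variable. -/

import Mathlib

open Filter MeasureTheory

/-- The Robbins–Siegmund Lemma. -/
theorem stmt_18 {Ω : Type*} {m0 : MeasurableSpace Ω} {μ : Measure Ω}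
    [IsProbabilityMeasure μ] (ℱ : Filtration ℕ m0)
    (v θ ε δ : ℕ → Ω → ℝ)
    (hv_adapted : Adapted ℱ v) (hθ_adapted : Adapted ℱ θ)
    (hε_adapted : Adapted ℱ ε) (hδ_adapted : Adapted ℱ δ)
    (hv_int : ∀ k, Integrable (v k) μ) (hθ_int : ∀ k, Integrable (θ k) μ)
    (hε_int : ∀ k, Integrable (ε k) μ) (hδ_int : ∀ k, Integrable (δ k) μ)
    (hv_nonneg : ∀ k ω, 0 ≤ v k ω) (hθ_nonneg : ∀ k ω, 0 ≤ θ k ω)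
    (hε_nonneg : ∀ k ω, 0 ≤ ε k ω) (hδ_nonneg : ∀ k ω, 0 ≤ δ k ω)
    (hε_sum : ∀ᵐ ω ∂μ, Summable (fun k => ε k ω))
    (hδ_sum : ∀ᵐ ω ∂μ, Summable (fun k => δ k ω))
    (hrec : ∀ k, μ[v (k + 1) | ℱ k] ≤ᵐ[μ]
      fun ω => (1 + δ k ω) * v k ω + ε k ω - θ k ω) :
    ∀ᵐ ω ∂μ, (Summable fun k => θ k ω) ∧
      ∃ L, 0 ≤ L ∧ Tendsto (fun k => v k ω) atTop (nhds L) := by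
  classical
  set A : ℕ → Ω → ℝ := fun k ω => ∏ j ∈ Finset.range k, (1 + δ j ω) with hA_def
  have hAsucc : ∀ k ω, A (k + 1) ω = A k ω * (1 + δ k ω) := fun k ω =>
    Finset.prod_range_succ _ _
  have hA1 : ∀ k ω, 1 ≤ A k ω := by
    intro k ω
    induction k with
    | zero => simp [hA_def]
    | succ n ih => rw [hAsucc]; nlinarith [hδ_nonneg n ω]
  have hApos : ∀ k ω, 0 < A k ω := fun k ω => lt_of_lt_of_le one_pos (hA1 k ω)
  have hAmono : ∀ ω, Monotone fun k => A k ω := by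
    intro ω
    refine monotone_nat_of_le_succ fun k => ?_
    rw [hAsucc]
    nlinarith [hApos k ω, hδ_nonneg k ω]
  have hAmeas : ∀ n k, n ≤ k + 1 → StronglyMeasurable[ℱ k] (A n) := by
    intro n k hnk
    refine (Finset.measurable_prod (Finset.range n) fun j hj => ?_).stronglyMeasurable
    have hjk : j ≤ k := by
      have := Finset.mem_range.1 hj; omega
    exact ((Measurable.mono (hδ_adapted j) (ℱ.mono hjk) le_rfl)).const_add 1
  -- integrability of quotients
  have hAaesm : ∀ n, AEStronglyMeasurable (A n) μ :=
    fun n => ((hAmeas n n (by omega)).mono (ℱ.le n)).aestronglyMeasurable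
  have hqint : ∀ (f : Ω → ℝ), Integrable f μ → (∀ ω', 0 ≤ f ω') → ∀ n,
      Integrable (fun ω => f ω / A n ω) μ := by
    intro f hf hf0 n
    refine hf.mono' (hf.aemeasurable.div (hAaesm n).aemeasurable).aestronglyMeasurable ?_
    refine Eventually.of_forall fun ω => ?_
    rw [Real.norm_eq_abs, abs_of_nonneg (div_nonneg (hf0 ω) (hApos n ω).le)]
    exact div_le_self (hf0 ω) (hA1 n ω)
  set Tθ : ℕ → Ω → ℝ := fun k ω => ∑ j ∈ Finset.range k, θ j ω / A (j + 1) ω with hTθ_def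
  set Tε : ℕ → Ω → ℝ := fun k ω => ∑ j ∈ Finset.range k, ε j ω / A (j + 1) ω with hTε_def
  set u : ℕ → Ω → ℝ := fun k ω => v k ω / A k ω + Tθ k ω - Tε k ω with hu_def
  have hqmeas : ∀ (f : ℕ → Ω → ℝ), Adapted ℱ f → ∀ j k, j + 1 ≤ k + 1 →
      StronglyMeasurable[ℱ k] (fun ω => f j ω / A (j + 1) ω) := by
    intro f hf j k hjk
    have hj : j ≤ k := by omega
    exact ((Measurable.mono (hf j) (ℱ.mono hj) le_rfl)).div
      ((hAmeas (j + 1) k (by omega)).measurable) |>.stronglyMeasurable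
  have hTθ_meas : ∀ n k, n ≤ k + 1 → StronglyMeasurable[ℱ k] (Tθ n) := by
    intro n k hnk
    refine (Finset.measurable_sum (Finset.range n) fun j hj => ?_).stronglyMeasurable
    have : j + 1 ≤ k + 1 := by have := Finset.mem_range.1 hj; omega
    exact (hqmeas θ hθ_adapted j k this).measurable
  have hTε_meas : ∀ n k, n ≤ k + 1 → StronglyMeasurable[ℱ k] (Tε n) := by
    intro n k hnk
    refine (Finset.measurable_sum (Finset.range n) fun j hj => ?_).stronglyMeasurable
    have : j + 1 ≤ k + 1 := by have := Finset.mem_range.1 hj; omega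
    exact (hqmeas ε hε_adapted j k this).measurable
  have hTθ_int : ∀ n, Integrable (Tθ n) μ := fun n =>
    integrable_finset_sum _ fun j _ => hqint (θ j) (hθ_int j) (hθ_nonneg j) (j + 1)
  have hTε_int : ∀ n, Integrable (Tε n) μ := fun n =>
    integrable_finset_sum _ fun j _ => hqint (ε j) (hε_int j) (hε_nonneg j) (j + 1)
  have hu_meas : ∀ k, StronglyMeasurable[ℱ k] (u k) := by
    intro k
    refine ((((show Measurable[ℱ k] (v k) from hv_adapted k).div
      ((hAmeas k k (by omega)).measurable)).add
      (hTθ_meas k k (by omega)).measurable).sub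
      (hTε_meas k k (by omega)).measurable).stronglyMeasurable
  have hu_int : ∀ k, Integrable (u k) μ := fun k =>
    ((hqint (v k) (hv_int k) (hv_nonneg k) k).add (hTθ_int k)).sub (hTε_int k)
  -- the key one-step supermartingale inequality for u
  have hcond : ∀ k, μ[u (k + 1) | ℱ k] ≤ᵐ[μ] u k := by
    intro k
    set w : Ω → ℝ := fun ω => (A (k + 1) ω)⁻¹ with hw_def
    have hw_meas : StronglyMeasurable[ℱ k] w :=
      ((hAmeas (k + 1) k le_rfl).measurable.inv).stronglyMeasurable
    have hw_nonneg : ∀ ω', 0 ≤ w ω' := fun ω' => inv_nonneg.2 (hApos _ ω').le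
    have hwv_eq : ∀ ω', w ω' * v (k + 1) ω' = v (k + 1) ω' / A (k + 1) ω' := fun ω' =>
      (div_eq_inv_mul _ _).symm
    have hwv_int : Integrable (w * v (k + 1)) μ := by
      refine (hv_int (k + 1)).mono'
        (((hw_meas.mono (ℱ.le k)).aestronglyMeasurable.mul
          (hv_int (k + 1)).aestronglyMeasurable)) ?_
      refine Eventually.of_forall fun ω' => ?_
      simp only [Pi.mul_apply, Real.norm_eq_abs]
      rw [hwv_eq ω', abs_of_nonneg (div_nonneg (hv_nonneg _ ω') (hApos _ ω').le)]
      exact div_le_self (hv_nonneg _ ω') (hA1 _ ω')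
    have hg_meas : StronglyMeasurable[ℱ k] (fun ω' => Tθ (k + 1) ω' - Tε (k + 1) ω') :=
      ((hTθ_meas (k + 1) k le_rfl).measurable.sub
        (hTε_meas (k + 1) k le_rfl).measurable).stronglyMeasurable
    have hg_int : Integrable (fun ω' => Tθ (k + 1) ω' - Tε (k + 1) ω') μ :=
      (hTθ_int _).sub (hTε_int _)
    have hu_eq : u (k + 1) = w * v (k + 1) + fun ω' => Tθ (k + 1) ω' - Tε (k + 1) ω' := by
      funext ω'
      simp only [hu_def, Pi.add_apply, Pi.mul_apply, hw_def]
      rw [div_eq_inv_mul]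
      ring
    have h1 : μ[u (k + 1)|ℱ k] =ᵐ[μ]
        fun ω' => w ω' * (μ[v (k + 1)|ℱ k]) ω' + (Tθ (k + 1) ω' - Tε (k + 1) ω') := by
      rw [hu_eq]
      refine (condExp_add hwv_int hg_int _).trans ?_
      have h3 := condExp_of_stronglyMeasurable (ℱ.le k) hg_meas hg_int
      rw [h3]
      filter_upwards [condExp_mul_of_stronglyMeasurable_left hw_meas hwv_int (hv_int (k + 1))]
        with ω' hω'
      simp only [Pi.add_apply, Pi.mul_apply] at hω' ⊢
      rw [hω']
    filter_upwards [h1, hrec k] with ω' h1ω hrecω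
    rw [h1ω]
    have hδpos : (0 : ℝ) < 1 + δ k ω' := by linarith [hδ_nonneg k ω']
    have hAne : A k ω' ≠ 0 := (hApos k ω').ne'
    have hAsne : A (k + 1) ω' ≠ 0 := (hApos (k + 1) ω').ne'
    calc w ω' * (μ[v (k + 1)|ℱ k]) ω' + (Tθ (k + 1) ω' - Tε (k + 1) ω')
        ≤ w ω' * ((1 + δ k ω') * v k ω' + ε k ω' - θ k ω')
          + (Tθ (k + 1) ω' - Tε (k + 1) ω') := by
          exact add_le_add_left (mul_le_mul_of_nonneg_left hrecω (hw_nonneg ω')) _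
      _ = u k ω' := by
          simp only [hu_def, hTθ_def, hTε_def, Finset.sum_range_succ, hw_def, hAsucc k ω']
          field_simp
          ring
  have hTθ_nonneg : ∀ k ω', 0 ≤ Tθ k ω' := fun k ω' =>
    Finset.sum_nonneg fun j _ => div_nonneg (hθ_nonneg j ω') (hApos _ ω').le
  have hTε_mono : ∀ ω' ⦃m n : ℕ⦄, m ≤ n → Tε m ω' ≤ Tε n ω' := by
    intro ω'
    refine monotone_nat_of_le_succ fun k => ?_
    simp only [hTε_def, Finset.sum_range_succ]
    have := div_nonneg (hε_nonneg k ω') (hApos (k + 1) ω').le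
    linarith
  have hu_ge : ∀ k ω', -(Tε k ω') ≤ u k ω' := by
    intro k ω'
    simp only [hu_def]
    have := div_nonneg (hv_nonneg k ω') (hApos k ω').le
    linarith [hTθ_nonneg k ω']
  have hu0 : ∀ ω', u 0 ω' = v 0 ω' := by
    intro ω'; simp [hu_def, hTθ_def, hTε_def, hA_def]
  set c : ℕ → ℕ → Ω → ℝ := fun a j ω' => if Tε (j + 1) ω' ≤ (a : ℝ) then 1 else 0
    with hc_def
  set U : ℕ → ℕ → Ω → ℝ := fun a k ω' =>
    u 0 ω' + ∑ j ∈ Finset.range k, c a j ω' * (u (j + 1) ω' - u j ω') with hU_def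
  have hUsucc : ∀ a k ω',
      U a (k + 1) ω' = U a k ω' + c a k ω' * (u (k + 1) ω' - u k ω') := by
    intro a k ω'; simp only [hU_def, Finset.sum_range_succ]; ring
  have hc_nonneg : ∀ a j ω', 0 ≤ c a j ω' := by
    intro a j ω'; simp only [hc_def]; split <;> norm_num
  have hc_abs : ∀ a j ω', |c a j ω'| ≤ 1 := by
    intro a j ω'; simp only [hc_def]; split <;> norm_num
  have hc_meas : ∀ a j, StronglyMeasurable[ℱ j] (c a j) := by
    intro a j
    refine (Measurable.ite ?_ measurable_const measurable_const).stronglyMeasurable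
    exact measurableSet_le (hTε_meas (j + 1) j le_rfl).measurable measurable_const
  have hU_eq_u : ∀ (a : ℕ) ω' k, (∀ j, j < k → Tε (j + 1) ω' ≤ (a : ℝ)) →
      U a k ω' = u k ω' := by
    intro a ω' k
    induction k with
    | zero => intro _; simp [hU_def]
    | succ n ih =>
      intro h
      rw [hUsucc, ih fun j hj => h j (by omega)]
      have hcn : c a n ω' = 1 := by
        simp only [hc_def]; rw [if_pos (h n (by omega))]
      rw [hcn]; ring
  have hU_ge : ∀ (a : ℕ) k ω', -(a : ℝ) ≤ U a k ω' := by
    intro a k ω'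
    induction k with
    | zero =>
      have h0 : U a 0 ω' = u 0 ω' := by simp [hU_def]
      rw [h0, hu0]
      have := hv_nonneg 0 ω'
      have ha : (0 : ℝ) ≤ (a : ℝ) := Nat.cast_nonneg a
      linarith
    | succ n ih =>
      by_cases h : Tε (n + 1) ω' ≤ (a : ℝ)
      · have hall : ∀ j, j < n + 1 → Tε (j + 1) ω' ≤ (a : ℝ) := fun j hj =>
          le_trans (hTε_mono ω' (by omega : j + 1 ≤ n + 1)) h
        rw [hU_eq_u a ω' (n + 1) hall]
        calc -(a : ℝ) ≤ -(Tε (n + 1) ω') := by linarith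
          _ ≤ u (n + 1) ω' := hu_ge _ _
      · have hcn : c a n ω' = 0 := by simp only [hc_def]; rw [if_neg h]
        rw [hUsucc, hcn]; simpa using ih
  have hU_meas : ∀ a k, StronglyMeasurable[ℱ k] (U a k) := by
    intro a k
    refine (Measurable.add ?_ ?_).stronglyMeasurable
    · exact ((hu_meas 0).mono (ℱ.mono (Nat.zero_le k))).measurable
    · refine Finset.measurable_sum _ fun j hj => ?_
      have hjk : j < k := Finset.mem_range.1 hj
      exact ((hc_meas a j).mono (ℱ.mono hjk.le)).measurable.mul
        ((((hu_meas (j + 1)).mono (ℱ.mono (by omega))).measurable).sub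
          (((hu_meas j).mono (ℱ.mono hjk.le)).measurable))
  have hcu_int : ∀ a j (f : Ω → ℝ), Integrable f μ →
      Integrable (fun ω' => c a j ω' * f ω') μ := by
    intro a j f hf
    refine hf.abs.mono' ?_ ?_
    · exact (((hc_meas a j).mono (ℱ.le j)).aestronglyMeasurable.aemeasurable.mul
        hf.aestronglyMeasurable.aemeasurable).aestronglyMeasurable
    · refine Eventually.of_forall fun ω' => ?_
      rw [Real.norm_eq_abs, abs_mul]
      calc |c a j ω'| * |f ω'| ≤ 1 * |f ω'| :=
            mul_le_mul_of_nonneg_right (hc_abs a j ω') (abs_nonneg _)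
        _ = |f ω'| := one_mul _
  have hU_int : ∀ a k, Integrable (U a k) μ := by
    intro a k
    refine (hu_int 0).add (integrable_finset_sum _ fun j _ => ?_)
    exact hcu_int a j _ ((hu_int (j + 1)).sub (hu_int j))
  have hUcond : ∀ a k, μ[U a (k + 1)|ℱ k] ≤ᵐ[μ] U a k := by
    intro a k
    have hck : StronglyMeasurable[ℱ k] (c a k) := hc_meas a k
    have hG_meas : StronglyMeasurable[ℱ k] (fun ω' => U a k ω' - c a k ω' * u k ω') :=
      ((hU_meas a k).measurable.sub (hck.measurable.mul (hu_meas k).measurable)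
        ).stronglyMeasurable
    have hG_int : Integrable (fun ω' => U a k ω' - c a k ω' * u k ω') μ :=
      (hU_int a k).sub (hcu_int a k _ (hu_int k))
    have hcu : Integrable (c a k * u (k + 1)) μ := hcu_int a k _ (hu_int (k + 1))
    have hsplit : U a (k + 1) =
        (fun ω' => U a k ω' - c a k ω' * u k ω') + c a k * u (k + 1) := by
      funext ω'
      simp only [Pi.add_apply, Pi.mul_apply, hUsucc]
      ring
    have h1 : μ[U a (k + 1)|ℱ k] =ᵐ[μ]
        fun ω' => (U a k ω' - c a k ω' * u k ω') + c a k ω' * (μ[u (k + 1)|ℱ k]) ω' := by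
      rw [hsplit]
      refine (condExp_add hG_int hcu _).trans ?_
      rw [condExp_of_stronglyMeasurable (ℱ.le k) hG_meas hG_int]
      filter_upwards [condExp_mul_of_stronglyMeasurable_left hck hcu (hu_int (k + 1))]
        with ω' hω'
      simp only [Pi.add_apply, Pi.mul_apply] at hω' ⊢
      rw [hω']
    filter_upwards [h1, hcond k] with ω' h1ω hcω
    rw [h1ω]
    have := mul_le_mul_of_nonneg_left hcω (hc_nonneg a k ω')
    linarith
  have hUsup : ∀ a, Supermartingale (U a) ℱ μ := fun a =>
    supermartingale_nat (hU_meas a) (hU_int a) (hUcond a)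
  set C : ℝ := max (∫ ω', u 0 ω' ∂μ) 0 with hC_def
  have hC_nonneg : 0 ≤ C := le_max_right _ _
  have key : ∀ a : ℕ, ∀ᵐ ω' ∂μ, ∃ l, Tendsto (fun k => U a k ω') atTop (nhds l) := by
    intro a
    set g : ℕ → Ω → ℝ := -U a + fun _ _ => C with hg_def
    have hgsub : Submartingale g ℱ μ :=
      (hUsup a).neg.add_martingale (martingale_const ℱ μ C)
    have hint0 : ∫ ω', U a 0 ω' ∂μ ≤ C := by
      have hU0 : U a 0 = u 0 := by funext ω'; simp [hU_def]
      rw [hU0]; exact le_max_left _ _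
    have hintn : ∀ n, ∫ ω', U a n ω' ∂μ ≤ C := by
      intro n
      refine le_trans ?_ hint0
      have h := (hUsup a).setIntegral_le (Nat.zero_le n)
        (@MeasurableSet.univ _ (ℱ 0))
      simpa [setIntegral_univ] using h
    have hbdd : ∀ n, eLpNorm (g n) 1 μ ≤ 2 * μ Set.univ * ENNReal.ofReal ((a : ℝ) + C) := by
      intro n
      refine eLpNorm_one_le_of_le' (hgsub.integrable n) ?_ ?_
      · have h1 : ∫ ω', (-U a n ω' + C) ∂μ
            = (∫ ω', -U a n ω' ∂μ) + ∫ _ω', C ∂μ :=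
          integral_add ((hU_int a n).neg) (integrable_const C)
        have hgi : ∫ ω', g n ω' ∂μ = C - ∫ ω', U a n ω' ∂μ := by
          simp only [hg_def, Pi.add_apply, Pi.neg_apply]
          rw [h1, integral_neg, integral_const]
          simp [measure_univ]
          ring
        rw [hgi]
        linarith [hintn n]
      · refine Eventually.of_forall fun ω' => ?_
        simp only [hg_def, Pi.add_apply, Pi.neg_apply]
        linarith [hU_ge a n ω']
    have hbdd' : ∀ n, eLpNorm (g n) 1 μ ≤ ((2 * Real.toNNReal ((a : ℝ) + C) : NNReal) : ENNReal) := by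
      intro n
      refine le_trans (hbdd n) ?_
      rw [measure_univ, mul_one]
      rw [ENNReal.coe_mul]
      simp [ENNReal.ofReal]
    filter_upwards [hgsub.ae_tendsto_limitProcess hbdd'] with ω' hω'
    refine ⟨C - ℱ.limitProcess g μ ω', ?_⟩
    refine ((tendsto_const_nhds (x := C)).sub hω').congr fun k => ?_
    simp only [hg_def, Pi.add_apply, Pi.neg_apply]
    ring
  rw [← ae_all_iff] at key
  filter_upwards [key, hε_sum, hδ_sum] with ω hU hεs hδs
  have hAle : ∀ n, A n ω ≤ Real.exp (∑' j, δ j ω) := by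
    intro n
    have h1 : A n ω ≤ ∏ j ∈ Finset.range n, Real.exp (δ j ω) := by
      simp only [hA_def]
      refine Finset.prod_le_prod (fun j _ => by linarith [hδ_nonneg j ω]) fun j _ => ?_
      linarith [Real.add_one_le_exp (δ j ω)]
    rw [← Real.exp_sum] at h1
    refine h1.trans (Real.exp_le_exp.2 ?_)
    exact Summable.sum_le_tsum (Finset.range n) (fun i _ => hδ_nonneg i ω) hδs
  have hεA_sum : Summable fun j => ε j ω / A (j + 1) ω :=
    Summable.of_nonneg_of_le (fun j => div_nonneg (hε_nonneg j ω) (hApos _ ω).le)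
      (fun j => div_le_self (hε_nonneg j ω) (hA1 _ ω)) hεs
  obtain ⟨a, ha⟩ := exists_nat_ge (∑' j, ε j ω / A (j + 1) ω)
  have hTε_le : ∀ k, Tε k ω ≤ (a : ℝ) := by
    intro k
    refine le_trans ?_ ha
    simp only [hTε_def]
    exact Summable.sum_le_tsum (Finset.range k)
      (fun i _ => div_nonneg (hε_nonneg i ω) (hApos _ ω).le) hεA_sum
  obtain ⟨l, hl⟩ := hU a
  have hu_tends : Tendsto (fun k => u k ω) atTop (nhds l) :=
    hl.congr fun k => hU_eq_u a ω k fun j _ => hTε_le (j + 1)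
  have hTε_tends : Tendsto (fun k => Tε k ω) atTop
      (nhds (∑' j, ε j ω / A (j + 1) ω)) := by
    simpa only [hTε_def] using hεA_sum.hasSum.tendsto_sum_nat
  have hW : Tendsto (fun k => v k ω / A k ω + Tθ k ω) atTop
      (nhds (l + ∑' j, ε j ω / A (j + 1) ω)) := by
    refine (hu_tends.add hTε_tends).congr fun k => ?_
    simp only [hu_def]
    ring
  have hTθ_mono : Monotone fun k => Tθ k ω := monotone_nat_of_le_succ fun k => by
    simp only [hTθ_def, Finset.sum_range_succ]
    linarith [div_nonneg (hθ_nonneg k ω) (hApos (k + 1) ω).le]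
  have hTθ_bdd : BddAbove (Set.range fun k => Tθ k ω) := by
    obtain ⟨B, hB⟩ := hW.bddAbove_range
    refine ⟨B, ?_⟩
    rintro x ⟨k, rfl⟩
    refine le_trans ?_ (hB ⟨k, rfl⟩)
    have := div_nonneg (hv_nonneg k ω) (hApos k ω).le
    linarith
  have hTθ_tends : Tendsto (fun k => Tθ k ω) atTop (nhds (⨆ k, Tθ k ω)) :=
    tendsto_atTop_ciSup hTθ_mono hTθ_bdd
  have hθA_sum : Summable fun j => θ j ω / A (j + 1) ω := by
    refine summable_of_sum_range_le (c := ⨆ k, Tθ k ω)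
      (fun j => div_nonneg (hθ_nonneg j ω) (hApos _ ω).le) fun n => ?_
    have h2 : Tθ n ω ≤ ⨆ k, Tθ k ω := le_ciSup hTθ_bdd n
    simpa only [hTθ_def] using h2
  have hθ_sum : Summable fun k => θ k ω := by
    refine Summable.of_nonneg_of_le (fun j => hθ_nonneg j ω) (fun j => ?_)
      (hθA_sum.mul_right (Real.exp (∑' j, δ j ω)))
    calc θ j ω = θ j ω / A (j + 1) ω * A (j + 1) ω :=
          (div_mul_cancel₀ _ (hApos (j + 1) ω).ne').symm
      _ ≤ θ j ω / A (j + 1) ω * Real.exp (∑' i, δ i ω) :=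
          mul_le_mul_of_nonneg_left (hAle (j + 1))
            (div_nonneg (hθ_nonneg j ω) (hApos _ ω).le)
  have hvA_tends : Tendsto (fun k => v k ω / A k ω) atTop
      (nhds (l + (∑' j, ε j ω / A (j + 1) ω) - ⨆ k, Tθ k ω)) := by
    refine (hW.sub hTθ_tends).congr fun k => ?_
    ring
  have hL'_nonneg : 0 ≤ l + (∑' j, ε j ω / A (j + 1) ω) - ⨆ k, Tθ k ω :=
    le_of_tendsto_of_tendsto' tendsto_const_nhds hvA_tends fun k =>
      div_nonneg (hv_nonneg k ω) (hApos k ω).le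
  have hA_bdd : BddAbove (Set.range fun k => A k ω) :=
    ⟨Real.exp (∑' j, δ j ω), by rintro x ⟨n, rfl⟩; exact hAle n⟩
  have hA_tends : Tendsto (fun k => A k ω) atTop (nhds (⨆ k, A k ω)) :=
    tendsto_atTop_ciSup (hAmono ω) hA_bdd
  have hLA1 : 1 ≤ ⨆ k, A k ω := le_trans (hA1 0 ω) (le_ciSup hA_bdd 0)
  refine ⟨hθ_sum, (l + (∑' j, ε j ω / A (j + 1) ω) - ⨆ k, Tθ k ω) * ⨆ k, A k ω,
    mul_nonneg hL'_nonneg (by linarith), ?_⟩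
  refine (hvA_tends.mul hA_tends).congr fun k => ?_
  exact div_mul_cancel₀ _ (hApos k ω).ne'
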